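/- The function F(x) = ((k+1)/cosh²(kx))^(1/(2k)) is a positive solution of the ODE −F'' − F^(2k+1) = −F on ℝ, for any real k > 0. -/

import Mathlib

theorem nls_profile_1d (k : ℝ) (hk : 0 < k) (F : ℝ → ℝ)
    (hF : ∀ x, F x = ((k + 1) / (Real.cosh (k * x)) ^ 2) ^ (1 / (2 * k))) :
    ∀ x : ℝ, 0 < F x ∧ -(deriv (deriv F) x) - F x ^ (2 * k + 1) = -F x := by
  have hk0 : k ≠ 0 := hk.ne'
  have hk1 : (0:ℝ) < k + 1 := by linarith
  set c : ℝ := (k + 1) ^ (1 / (2 * k)) with hc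
  set p : ℝ := -1 / k with hp
  have hpk : p * k = -1 := by rw [hp]; field_simp
  have hcpos : 0 < c := Real.rpow_pos_of_pos hk1 _
  have hy : ∀ x : ℝ, 0 < Real.cosh (k * x) := fun x => Real.cosh_pos _
  -- rewrite F
  have hFe : F = fun x => c * Real.cosh (k * x) ^ p := by
    funext x
    rw [hF x, Real.div_rpow hk1.le (by positivity)]
    rw [← Real.rpow_natCast (Real.cosh (k * x)) 2, ← Real.rpow_mul (hy x).le,
      div_eq_mul_inv, ← Real.rpow_neg (hy x).le]
    congr 1
    push_cast
    rw [hp]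
    congr 1
    field_simp
  have hcosh : ∀ x : ℝ, HasDerivAt (fun x => Real.cosh (k * x)) (k * Real.sinh (k * x)) x := by
    intro x
    have := (Real.hasDerivAt_cosh (k * x)).comp x ((hasDerivAt_id x).const_mul k)
    simpa [mul_comm, Function.comp_def] using this
  have hsinh : ∀ x : ℝ, HasDerivAt (fun x => Real.sinh (k * x)) (k * Real.cosh (k * x)) x := by
    intro x
    have := (Real.hasDerivAt_sinh (k * x)).comp x ((hasDerivAt_id x).const_mul k)
    simpa [mul_comm, Function.comp_def] using this
  have hF1 : ∀ x : ℝ, HasDerivAt F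
      (c * (k * Real.sinh (k * x) * p * Real.cosh (k * x) ^ (p - 1))) x := by
    intro x
    rw [hFe]
    exact ((hcosh x).rpow_const (Or.inl (hy x).ne')).const_mul c
  have hd1 : deriv F = fun x => c * p * k *
      (Real.sinh (k * x) * Real.cosh (k * x) ^ (p - 1)) := by
    funext x
    rw [(hF1 x).deriv]
    ring
  have hF2 : ∀ x : ℝ, HasDerivAt (deriv F)
      (c * p * k * (k * Real.cosh (k * x) * Real.cosh (k * x) ^ (p - 1) +
        Real.sinh (k * x) * (k * Real.sinh (k * x) * (p - 1) * Real.cosh (k * x) ^ (p - 1 - 1)))) x := by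
    intro x
    rw [hd1]
    exact ((hsinh x).mul ((hcosh x).rpow_const (Or.inl (hy x).ne'))).const_mul (c * p * k)
  intro x
  set y := Real.cosh (k * x) with hyx
  set s := Real.sinh (k * x) with hsx
  have hy0 : 0 < y := hy x
  constructor
  · rw [hF x]; positivity
  rw [(hF2 x).deriv, hFe]
  simp only
  -- rpow algebra
  have hz : y ^ (p - 1 - 1) = y ^ (p - 2) := by ring_nf
  have hyp1 : y ^ (p - 1) = y ^ (p - 2) * y := by
    rw [← Real.rpow_add_one hy0.ne' (p - 2)]; ring_nf
  have hypp : y ^ p = y ^ (p - 2) * y ^ 2 := by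
    have h2 : y ^ p = y ^ (p - 2) * y ^ ((2:ℕ) : ℝ) := by
      rw [← Real.rpow_add hy0]; norm_num
    rw [h2, Real.rpow_natCast]
  have hs2 : s ^ 2 = y ^ 2 - 1 := by
    rw [hsx, hyx, Real.sinh_sq]
  have hpow : (c * y ^ p) ^ (2 * k + 1) = (k + 1) * c * y ^ (p - 2) := by
    rw [Real.mul_rpow hcpos.le (Real.rpow_pos_of_pos hy0 p).le,
      ← Real.rpow_mul hy0.le, hc, ← Real.rpow_mul hk1.le]
    have e1 : p * (2 * k + 1) = p - 2 := by rw [hp]; field_simp; ring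
    have e2 : 1 / (2 * k) * (2 * k + 1) = 1 + 1 / (2 * k) := by field_simp
    rw [e1, e2, Real.rpow_add hk1, Real.rpow_one]
  rw [hpow, hz, hyp1, hypp]
  set z := y ^ (p - 2) with hzz
  linear_combination (-(c * p * k ^ 2 * (p - 1) * z)) * hs2 +
    (p * k * (c * z - c * z * y ^ 2) + (-c * k * z - c * z + c * z * y ^ 2)) * hpk
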